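/- If G₁ and G₂ are residually finite groups with isomorphic profinite completions, then G₁ is uniformly amenable if and only if G₂ is uniformly amenable. -/

import Mathlib

open Pointwise

attribute [local instance] Classical.propDecidable

/-- The (finite-index normal) subgroups indexing the profinite completion. -/
def FIN (G : Type*) [Group G] : Type _ := {N : Subgroup G // N.Normal ∧ N.FiniteIndex}

instance {G : Type*} [Group G] (N : FIN G) : (N.1).Normal := N.2.1

/-- The profinite completion of a group `G`: the inverse limit of all finite quotients
`G/N` over finite-index normal subgroups `N`, realized as the subgroup of compatible
families in `∏_N G/N`. -/
def profiniteCompletion (G : Type*) [Group G] : Subgroup (∀ N : FIN G, G ⧸ N.1) where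
  carrier := {f | ∀ (N M : FIN G) (h : N.1 ≤ M.1),
    QuotientGroup.map N.1 M.1 (MonoidHom.id G) (fun _ hx => h hx) (f N) = f M}
  one_mem' := by intro N M h; simp
  mul_mem' := by intro a b ha hb N M h; simp [Pi.mul_apply, map_mul, ha N M h, hb N M h]
  inv_mem' := by intro a ha N M h; simp [Pi.inv_apply, map_inv, ha N M h]

/-- A group is residually finite: every nontrivial element survives in some finite
quotient. -/
def ResiduallyFinite (G : Type*) [Group G] : Prop :=
  ∀ g : G, g ≠ 1 → ∃ N : Subgroup G, N.Normal ∧ N.FiniteIndex ∧ g ∉ N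

/-- A group is uniformly amenable. -/
def UniformlyAmenableGroup (K : Type*) [Group K] : Prop :=
  ∃ m : ℝ → ℕ → ℕ, ∀ ε : ℝ, 0 < ε → ∀ S : Finset K,
    ∃ F : Finset K, F.Nonempty ∧ F.card ≤ m ε S.card ∧
      ((S * F).card : ℝ) ≤ (1 + ε) * F.card


open Function Finset

/-- The Følner condition with a fixed bounding function. -/
def SatUA (K : Type*) [Group K] (m : ℝ → ℕ → ℕ) : Prop :=
  ∀ ε : ℝ, 0 < ε → ∀ S : Finset K,
    ∃ F : Finset K, F.Nonempty ∧ F.card ≤ m ε S.card ∧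
      ((S * F).card : ℝ) ≤ (1 + ε) * F.card

section LayerCake

variable {G Q : Type*} [Group G] [Group Q]

/-- Splitting a Følner set along cosets of a subgroup. -/
theorem exists_coset_folner {K : Type*} [Group K] (R : Subgroup K) (S : Finset K)
    (hS : ∀ s ∈ S, s ∈ R) (ε : ℝ) :
    ∀ F : Finset K, F.Nonempty → ((S * F).card : ℝ) ≤ (1 + ε) * F.card →
      ∃ A : Finset K, ∃ c : K, A.Nonempty ∧ A ⊆ F ∧ c ∈ A ∧ (∀ a ∈ A, a * c⁻¹ ∈ R) ∧
        ((S * A).card : ℝ) ≤ (1 + ε) * A.card := by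
  intro F
  induction F using Finset.strongInduction with
  | _ F ih =>
    intro hFne hFol
    obtain ⟨c, hc⟩ := hFne
    set A : Finset K := F.filter (fun x => x * c⁻¹ ∈ R) with hA
    have hcA : c ∈ A := by
      refine Finset.mem_filter.2 ⟨hc, ?_⟩
      simp [R.one_mem]
    have hAF : A ⊆ F := Finset.filter_subset _ _
    by_cases hgood : ((S * A).card : ℝ) ≤ (1 + ε) * A.card
    · exact ⟨A, c, ⟨c, hcA⟩, hAF, hcA, fun a ha => (Finset.mem_filter.1 ha).2, hgood⟩
    · set B : Finset K := F \ A with hB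
      have hFAB : F = A ∪ B := by simp [hB, Finset.union_sdiff_of_subset hAF]
      have hBne : B.Nonempty := by
        by_contra h
        rw [Finset.not_nonempty_iff_eq_empty] at h
        have : A = F := by rw [hFAB, h, Finset.union_empty]
        rw [this] at hgood; exact hgood hFol
      have hmulA : ∀ x ∈ S * A, x * c⁻¹ ∈ R := by
        intro x hx
        obtain ⟨s, hs, a, ha, rfl⟩ := Finset.mem_mul.1 hx
        have : s * a * c⁻¹ = s * (a * c⁻¹) := by group
        rw [this]
        exact R.mul_mem (hS s hs) ((Finset.mem_filter.1 ha).2)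
      have hmulB : ∀ x ∈ S * B, x * c⁻¹ ∉ R := by
        intro x hx hmem
        obtain ⟨s, hs, b, hb, rfl⟩ := Finset.mem_mul.1 hx
        have hb' : b ∈ F \ A := hb
        have heq : b * c⁻¹ = s⁻¹ * (s * b * c⁻¹) := by group
        have hbR : b * c⁻¹ ∈ R := by rw [heq]; exact R.mul_mem (R.inv_mem (hS s hs)) hmem
        have : b ∈ A := Finset.mem_filter.2 ⟨(Finset.mem_sdiff.1 hb').1, hbR⟩
        exact (Finset.mem_sdiff.1 hb').2 this
      have hdisj : Disjoint (S * A) (S * B) := by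
        rw [Finset.disjoint_left]
        intro x hx hx'
        exact hmulB x hx' (hmulA x hx)
      have hsplit : S * F = S * A ∪ S * B := by rw [hFAB, Finset.mul_union]
      have hcardF : (F.card : ℝ) = A.card + B.card := by
        rw [hFAB, Finset.card_union_of_disjoint (Finset.disjoint_sdiff)]
        push_cast; ring
      have hcardSF : ((S * F).card : ℝ) = (S * A).card + (S * B).card := by
        rw [hsplit, Finset.card_union_of_disjoint hdisj]; push_cast; ring
      have hexp : (1 + ε) * ((A.card : ℝ) + B.card) = (1 + ε) * A.card + (1 + ε) * B.card := by
        ring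
      have hBfol : ((S * B).card : ℝ) ≤ (1 + ε) * B.card := by
        push_neg at hgood
        rw [hcardF] at hFol
        rw [hexp] at hFol
        linarith
      have hBss : B ⊂ F := by
        refine Finset.ssubset_iff_of_subset Finset.sdiff_subset |>.2 ⟨c, hc, ?_⟩
        simp [hB, hcA]
      obtain ⟨A', c', h1, h2, h3, h4, h5⟩ := ih B hBss hBne hBfol
      exact ⟨A', c', h1, h2.trans Finset.sdiff_subset, h3, h4, h5⟩

/-- Uniform amenability passes to subgroups (injective images). -/
theorem satUA_of_injective {H K : Type*} [Group H] [Group K] (φ : H →* K)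
    (hφ : Function.Injective φ) {m : ℝ → ℕ → ℕ} (hK : SatUA K m) : SatUA H m := by
  intro ε hε S
  obtain ⟨F, hFne, hFcard, hFol⟩ := hK ε hε (S.image φ)
  have hrange : ∀ s ∈ S.image φ, s ∈ φ.range := by
    intro s hs
    obtain ⟨a, _, rfl⟩ := Finset.mem_image.1 hs
    exact ⟨a, rfl⟩
  obtain ⟨A, c, hAne, hAF, hcA, hAcoset, hAfol⟩ :=
    exists_coset_folner φ.range (S.image φ) hrange ε F hFne hFol
  -- pull back A * {c⁻¹} ⊆ range φ
  set ψ : K → H := fun x => if h : ∃ b, φ b = x then h.choose else 1 with hψ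
  have hψspec : ∀ x, x ∈ φ.range → φ (ψ x) = x := by
    intro x hx
    obtain ⟨b, hb⟩ := hx
    have h : ∃ b, φ b = x := ⟨b, hb⟩
    simp only [hψ, dif_pos h]
    exact h.choose_spec
  set F' : Finset H := A.image (fun a => ψ (a * c⁻¹)) with hF'
  have hφF' : F'.image φ = A * {c⁻¹} := by
    rw [hF', Finset.image_image, Finset.mul_singleton]
    apply Finset.image_congr
    intro a ha
    exact hψspec _ (hAcoset a ha)
  have hcardF' : F'.card = A.card := by
    have h1 : F'.card ≤ A.card := Finset.card_image_le
    have h2 : A.card = (F'.image φ).card := by rw [hφF', Finset.card_mul_singleton]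
    have h3 : (F'.image φ).card ≤ F'.card := Finset.card_image_le
    omega
  refine ⟨F', ?_, ?_, ?_⟩
  · exact hAne.image _
  · rw [hcardF']
    calc A.card ≤ F.card := Finset.card_le_card hAF
      _ ≤ m ε (S.image φ).card := hFcard
      _ = m ε S.card := by rw [Finset.card_image_of_injective S hφ]
  · have himg : (S * F').image φ = (S.image φ * A) * {c⁻¹} := by
      rw [Finset.image_mul φ, hφF', mul_assoc]
    have hcard : (S * F').card = ((S.image φ * A) * {c⁻¹}).card := by
      rw [← himg, Finset.card_image_of_injective _ hφ]
    rw [hcard, Finset.card_mul_singleton, hcardF']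
    exact hAfol

/-- Fiber weight of the pushforward of the counting measure of `F` under `φ`. -/
noncomputable def wt (φ : G →* Q) (F : Finset G) (q : Q) : ℕ :=
  (F.filter (fun x => φ x = q)).card

/-- Level sets of the weight function. -/
noncomputable def lvl (φ : G →* Q) (F : Finset G) (t : ℕ) : Finset Q :=
  (F.image φ).filter (fun q => t < wt φ F q)

theorem mem_image_iff_wt (φ : G →* Q) (F : Finset G) (q : Q) :
    q ∈ F.image φ ↔ 0 < wt φ F q := by
  simp [wt, Finset.card_pos, Finset.filter_nonempty_iff, Finset.mem_image]

theorem mem_lvl_iff (φ : G →* Q) (F : Finset G) (t : ℕ) (q : Q) :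
    q ∈ lvl φ F t ↔ t < wt φ F q := by
  rw [lvl, Finset.mem_filter, mem_image_iff_wt]
  omega

theorem wt_le_card (φ : G →* Q) (F : Finset G) (q : Q) : wt φ F q ≤ F.card :=
  Finset.card_le_card (Finset.filter_subset _ _)

theorem lvl_card_sum (φ : G →* Q) (F : Finset G) :
    ∑ t ∈ Finset.range F.card, (lvl φ F t).card = F.card := by
  have h1 : ∀ t, (lvl φ F t).card = ∑ q ∈ F.image φ, if t < wt φ F q then 1 else 0 := by
    intro t; rw [lvl, Finset.card_filter]
  calc ∑ t ∈ Finset.range F.card, (lvl φ F t).card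
      = ∑ t ∈ Finset.range F.card, ∑ q ∈ F.image φ, if t < wt φ F q then 1 else 0 := by
        exact Finset.sum_congr rfl fun t _ => h1 t
    _ = ∑ q ∈ F.image φ, ∑ t ∈ Finset.range F.card, if t < wt φ F q then 1 else 0 :=
        Finset.sum_comm
    _ = ∑ q ∈ F.image φ, wt φ F q := by
        refine Finset.sum_congr rfl fun q _ => ?_
        rw [← Finset.card_filter]
        have : (Finset.range F.card).filter (fun t => t < wt φ F q) = Finset.range (wt φ F q) := by
          ext t
          simp only [Finset.mem_filter, Finset.mem_range]
          have := wt_le_card φ F q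
          omega
        simp [this]
    _ = F.card := (Finset.card_eq_sum_card_image φ F).symm

theorem wt_shift (φ : G →* Q) (F : Finset G) (s : G) (q : Q) :
    wt φ (F.image (fun x => s * x)) q = wt φ F ((φ s)⁻¹ * q) := by
  rw [wt, wt]
  have : (F.image (fun x => s * x)).filter (fun y => φ y = q)
      = (F.filter (fun x => φ x = (φ s)⁻¹ * q)).image (fun x => s * x) := by
    ext y
    simp only [Finset.mem_filter, Finset.mem_image]
    constructor
    · rintro ⟨⟨x, hx, rfl⟩, hq⟩
      refine ⟨x, ⟨hx, ?_⟩, rfl⟩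
      rw [map_mul] at hq
      rw [← hq]; group
    · rintro ⟨x, ⟨hx, hq⟩, rfl⟩
      refine ⟨⟨x, hx, rfl⟩, ?_⟩
      rw [map_mul, hq]; group
  rw [this, Finset.card_image_of_injective _ (mul_right_injective s)]

theorem mem_lvl_image_iff (φ : G →* Q) (F : Finset G) (t : ℕ) (s : G) (q : Q) :
    q ∈ (lvl φ F t).image (fun r => φ s * r) ↔ t < wt φ F ((φ s)⁻¹ * q) := by
  constructor
  · rintro hq
    obtain ⟨r, hr, rfl⟩ := Finset.mem_image.1 hq
    rw [mem_lvl_iff] at hr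
    simpa using hr
  · intro h
    refine Finset.mem_image.2 ⟨(φ s)⁻¹ * q, (mem_lvl_iff φ F t _).2 h, by group⟩

theorem lvl_diff_card (φ : G →* Q) (F : Finset G) (s : G) :
    ∑ t ∈ Finset.range F.card,
      ((lvl φ F t).image (fun r => φ s * r) \ lvl φ F t).card
      ≤ ((F.image (fun x => s * x)) \ F).card := by
  classical
  set sF := F.image (fun x => s * x) with hsF
  set D := sF.image φ with hD
  have hdiff : ∀ t, (lvl φ F t).image (fun r => φ s * r) \ lvl φ F t
      = D.filter (fun q => t < wt φ F ((φ s)⁻¹ * q) ∧ ¬ t < wt φ F q) := by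
    intro t
    ext q
    simp only [Finset.mem_sdiff, Finset.mem_filter, mem_lvl_image_iff, mem_lvl_iff]
    constructor
    · rintro ⟨h1, h2⟩
      refine ⟨?_, h1, h2⟩
      -- q ∈ D since wt of sF at q is positive
      rw [hD, mem_image_iff_wt, wt_shift]
      omega
    · rintro ⟨_, h1, h2⟩
      exact ⟨h1, h2⟩
  have hperq : ∀ q ∈ D, ∑ t ∈ Finset.range F.card,
      (if t < wt φ F ((φ s)⁻¹ * q) ∧ ¬ t < wt φ F q then 1 else 0)
      = wt φ F ((φ s)⁻¹ * q) - wt φ F q := by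
    intro q _
    rw [← Finset.card_filter]
    have hle : wt φ F ((φ s)⁻¹ * q) ≤ F.card := wt_le_card _ _ _
    have : (Finset.range F.card).filter
        (fun t => t < wt φ F ((φ s)⁻¹ * q) ∧ ¬ t < wt φ F q)
        = Finset.Ico (wt φ F q) (wt φ F ((φ s)⁻¹ * q)) := by
      ext t
      simp only [Finset.mem_filter, Finset.mem_range, Finset.mem_Ico]
      omega
    rw [this, Nat.card_Ico]
  have hfiber : ∀ q, wt φ F ((φ s)⁻¹ * q) - wt φ F q ≤ ((sF \ F).filter (fun x => φ x = q)).card := by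
    intro q
    have h1 : wt φ F ((φ s)⁻¹ * q) = (sF.filter (fun x => φ x = q)).card := by
      rw [← wt_shift φ F s q]; rfl
    have h2 : sF.filter (fun x => φ x = q) ⊆
        F.filter (fun x => φ x = q) ∪ (sF \ F).filter (fun x => φ x = q) := by
      intro x hx
      rw [Finset.mem_filter] at hx
      by_cases hxF : x ∈ F
      · exact Finset.mem_union_left _ (Finset.mem_filter.2 ⟨hxF, hx.2⟩)
      · exact Finset.mem_union_right _ (Finset.mem_filter.2 ⟨Finset.mem_sdiff.2 ⟨hx.1, hxF⟩, hx.2⟩)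
    have h3 := (Finset.card_le_card h2).trans (Finset.card_union_le _ _)
    rw [h1]
    have : wt φ F q = (F.filter (fun x => φ x = q)).card := rfl
    omega
  calc ∑ t ∈ Finset.range F.card, ((lvl φ F t).image (fun r => φ s * r) \ lvl φ F t).card
      = ∑ t ∈ Finset.range F.card, ∑ q ∈ D,
          (if t < wt φ F ((φ s)⁻¹ * q) ∧ ¬ t < wt φ F q then 1 else 0) := by
        refine Finset.sum_congr rfl fun t _ => ?_
        rw [hdiff t, Finset.card_filter]
    _ = ∑ q ∈ D, ∑ t ∈ Finset.range F.card,
          (if t < wt φ F ((φ s)⁻¹ * q) ∧ ¬ t < wt φ F q then 1 else 0) := Finset.sum_comm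
    _ = ∑ q ∈ D, (wt φ F ((φ s)⁻¹ * q) - wt φ F q) := Finset.sum_congr rfl hperq
    _ ≤ ∑ q ∈ D, ((sF \ F).filter (fun x => φ x = q)).card :=
        Finset.sum_le_sum fun q _ => hfiber q
    _ = ∑ q ∈ (sF \ F).image φ, ((sF \ F).filter (fun x => φ x = q)).card := by
        refine (Finset.sum_subset ?_ ?_).symm
        · exact Finset.image_subset_image (Finset.sdiff_subset)
        · intro q _ hq
          rw [Finset.card_eq_zero, Finset.filter_eq_empty_iff]
          intro x hx
          intro hxq
          exact hq (Finset.mem_image.2 ⟨x, hx, hxq⟩)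
    _ = (sF \ F).card := (Finset.card_eq_sum_card_image φ (sF \ F)).symm

/-- The bounding function for quotients. -/
noncomputable def mbar (m : ℝ → ℕ → ℕ) : ℝ → ℕ → ℕ :=
  fun ε n => max 1 (max (m (ε / (2 * (n + 1))) n) (m (ε / (2 * (n + 1))) (n + 1)))

/-- Uniform amenability passes to quotients (surjective images), with a bound
depending only on the original bound. -/
theorem satUA_of_surjective {φ : G →* Q} (hφ : Function.Surjective φ)
    {m : ℝ → ℕ → ℕ} (hm : SatUA G m) : SatUA Q (mbar m) := by
  intro ε hε Sbar
  set n := Sbar.card with hn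
  set δ := ε / (2 * (n + 1)) with hδdef
  have hδ : 0 < δ := by positivity
  set S' : Finset Q := insert 1 Sbar with hS'
  have h1S' : (1 : Q) ∈ S' := Finset.mem_insert_self _ _
  -- a section of φ sending 1 to 1
  set sec : Q → G := fun q => if q = 1 then 1 else surjInv hφ q with hsec'
  have hsec : ∀ q, φ (sec q) = q := by
    intro q
    by_cases h : q = 1
    · simp [hsec', h]
    · simp [hsec', h, surjInv_eq hφ]
  have hsecinj : Function.Injective sec := fun a b h => by
    rw [← hsec a, ← hsec b, h]
  set S : Finset G := S'.image sec with hS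
  have h1S : (1 : G) ∈ S := by
    refine Finset.mem_image.2 ⟨1, h1S', ?_⟩
    simp [hsec']
  have hScard : S.card = S'.card := Finset.card_image_of_injective _ hsecinj
  have hSim : S.image φ = S' := by
    rw [hS, Finset.image_image]
    have : (φ ∘ sec) = id := funext hsec
    rw [this, Finset.image_id]
  obtain ⟨F, hFne, hFcard, hFol⟩ := hm δ hδ S
  have hT : 0 < F.card := Finset.card_pos.2 hFne
  -- each translate moves F little
  have hmove : ∀ s ∈ S, (((F.image (fun x => s * x)) \ F).card : ℝ) ≤ δ * F.card := by
    intro s hs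
    have hsub : (F.image (fun x => s * x)) ∪ F ⊆ S * F := by
      intro x hx
      rcases Finset.mem_union.1 hx with hx | hx
      · obtain ⟨y, hy, rfl⟩ := Finset.mem_image.1 hx
        exact Finset.mul_mem_mul hs hy
      · have : x = 1 * x := (one_mul x).symm
        rw [this]
        exact Finset.mul_mem_mul h1S hx
    have h1 : ((F.image (fun x => s * x)) \ F).card + F.card
        = ((F.image (fun x => s * x)) ∪ F).card := Finset.card_sdiff_add_card _ _
    have h2 : ((F.image (fun x => s * x)) ∪ F).card ≤ (S * F).card :=
      Finset.card_le_card hsub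
    have h3 : ((S * F).card : ℝ) ≤ (1 + δ) * F.card := hFol
    have h4 : (((F.image (fun x => s * x)) \ F).card : ℝ) + F.card
        ≤ ((S * F).card : ℝ) := by
      rw_mod_cast [h1]
      exact_mod_cast h2
    nlinarith
  -- the total displacement of all level sets
  have htotal : ∑ t ∈ Finset.range F.card,
      (∑ s ∈ S, (((lvl φ F t).image (fun r => φ s * r) \ lvl φ F t).card : ℝ))
      ≤ ε * F.card := by
    rw [Finset.sum_comm]
    have hstep : ∀ s ∈ S, ∑ t ∈ Finset.range F.card,
        ((((lvl φ F t).image (fun r => φ s * r) \ lvl φ F t).card : ℝ))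
        ≤ δ * F.card := by
      intro s hs
      have := lvl_diff_card φ F s
      calc ∑ t ∈ Finset.range F.card,
          ((((lvl φ F t).image (fun r => φ s * r) \ lvl φ F t).card : ℝ))
          = ((∑ t ∈ Finset.range F.card,
              ((lvl φ F t).image (fun r => φ s * r) \ lvl φ F t).card : ℕ) : ℝ) := by
            push_cast; ring
        _ ≤ (((F.image (fun x => s * x)) \ F).card : ℝ) := by exact_mod_cast this
        _ ≤ δ * F.card := hmove s hs
    calc ∑ s ∈ S, ∑ t ∈ Finset.range F.card,
        ((((lvl φ F t).image (fun r => φ s * r) \ lvl φ F t).card : ℝ))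
        ≤ ∑ s ∈ S, δ * F.card := Finset.sum_le_sum hstep
      _ = S.card * (δ * F.card) := by rw [Finset.sum_const, nsmul_eq_mul]
      _ ≤ (n + 1) * (δ * F.card) := by
          have hcard : S.card ≤ n + 1 := by
            rw [hScard]
            exact (Finset.card_insert_le _ _).trans (by omega)
          have : (S.card : ℝ) ≤ (n + 1 : ℝ) := by exact_mod_cast hcard
          have hpos : (0:ℝ) ≤ δ * F.card := by positivity
          nlinarith
      _ ≤ ε * F.card := by
          rw [hδdef]
          have hpos : (0:ℝ) < 2 * ((n:ℝ) + 1) := by positivity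
          rw [div_eq_mul_inv]
          have hF0 : (0:ℝ) ≤ (F.card : ℝ) := by positivity
          rw [show ((n:ℝ) + 1) * (ε * (2 * ((n:ℝ) + 1))⁻¹ * F.card)
            = ε * F.card * (((n:ℝ) + 1) * (2 * ((n:ℝ) + 1))⁻¹) by ring]
          have h2 : ((n:ℝ) + 1) * (2 * ((n:ℝ) + 1))⁻¹ = 1/2 := by
            field_simp
          rw [h2]
          nlinarith
  -- pigeonhole: find a good level set
  have hexists : ∃ t ∈ Finset.range F.card, (lvl φ F t).Nonempty ∧
      (∑ s ∈ S, (((lvl φ F t).image (fun r => φ s * r) \ lvl φ F t).card : ℝ))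
      ≤ ε * (lvl φ F t).card := by
    by_contra hcon
    push_neg at hcon
    have hstrict : ∑ t ∈ Finset.range F.card, ε * ((lvl φ F t).card : ℝ)
        < ∑ t ∈ Finset.range F.card,
          (∑ s ∈ S, (((lvl φ F t).image (fun r => φ s * r) \ lvl φ F t).card : ℝ)) := by
      apply Finset.sum_lt_sum
      · intro t ht
        by_cases hne : (lvl φ F t).Nonempty
        · exact le_of_lt (hcon t ht hne)
        · rw [Finset.not_nonempty_iff_eq_empty] at hne
          rw [hne]
          simp
      · refine ⟨0, Finset.mem_range.2 hT, ?_⟩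
        have hne : (lvl φ F 0).Nonempty := by
          obtain ⟨x, hx⟩ := hFne
          refine ⟨φ x, (mem_lvl_iff φ F 0 _).2 ?_⟩
          have : φ x ∈ F.image φ := Finset.mem_image_of_mem _ hx
          rw [mem_image_iff_wt] at this
          omega
        exact hcon 0 (Finset.mem_range.2 hT) hne
    have hsumlvl : ∑ t ∈ Finset.range F.card, ε * ((lvl φ F t).card : ℝ)
        = ε * F.card := by
      rw [← Finset.mul_sum]
      congr 1
      exact_mod_cast lvl_card_sum φ F
    rw [hsumlvl] at hstrict
    exact absurd (lt_of_lt_of_le hstrict htotal) (lt_irrefl _)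
  obtain ⟨t₀, _, hlvlne, hlvlgood⟩ := hexists
  set Fbar := lvl φ F t₀ with hFbar
  refine ⟨Fbar, hlvlne, ?_, ?_⟩
  · -- cardinality bound
    have h1 : Fbar.card ≤ F.card := by
      have ha : Fbar ⊆ F.image φ := Finset.filter_subset _ _
      exact le_trans (Finset.card_le_card ha) Finset.card_image_le
    have h2 : S.card = n ∨ S.card = n + 1 := by
      rw [hScard, hS']
      by_cases h : (1 : Q) ∈ Sbar
      · left; rw [Finset.insert_eq_self.2 h]
      · right; rw [Finset.card_insert_of_notMem h]
    have h3 : F.card ≤ mbar m ε n := by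
      rcases h2 with h | h
      · rw [h] at hFcard
        exact hFcard.trans (le_max_of_le_right (le_max_left _ _))
      · rw [h] at hFcard
        exact hFcard.trans (le_max_of_le_right (le_max_right _ _))
    exact h1.trans h3
  · -- Følner bound
    have hsub : Sbar * Fbar ⊆ Fbar ∪ S.biUnion
        (fun s => (Fbar.image (fun r => φ s * r)) \ Fbar) := by
      intro x hx
      obtain ⟨q, hq, a, ha, rfl⟩ := Finset.mem_mul.1 hx
      have hq' : q ∈ S.image φ := by rw [hSim]; exact Finset.mem_insert_of_mem hq
      obtain ⟨s, hs, rfl⟩ := Finset.mem_image.1 hq'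
      by_cases hmem : φ s * a ∈ Fbar
      · exact Finset.mem_union_left _ hmem
      · refine Finset.mem_union_right _ (Finset.mem_biUnion.2 ⟨s, hs, ?_⟩)
        exact Finset.mem_sdiff.2 ⟨Finset.mem_image_of_mem _ ha, hmem⟩
    have hcard1 : (Sbar * Fbar).card ≤ Fbar.card +
        ∑ s ∈ S, ((Fbar.image (fun r => φ s * r)) \ Fbar).card := by
      calc (Sbar * Fbar).card ≤ (Fbar ∪ S.biUnion
            (fun s => (Fbar.image (fun r => φ s * r)) \ Fbar)).card :=
            Finset.card_le_card hsub
        _ ≤ Fbar.card + (S.biUnion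
            (fun s => (Fbar.image (fun r => φ s * r)) \ Fbar)).card :=
            Finset.card_union_le _ _
        _ ≤ Fbar.card + ∑ s ∈ S, ((Fbar.image (fun r => φ s * r)) \ Fbar).card := by
            exact Nat.add_le_add_left (Finset.card_biUnion_le) _
    have hcard2 : ((Sbar * Fbar).card : ℝ) ≤ Fbar.card + ε * Fbar.card := by
      have h5 : ((Sbar * Fbar).card : ℝ) ≤ (Fbar.card : ℝ) +
          ∑ s ∈ S, (((Fbar.image (fun r => φ s * r)) \ Fbar).card : ℝ) := by
        push_cast [← Nat.cast_sum]
        exact_mod_cast hcard1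
      exact h5.trans (by linarith [hlvlgood])
    linarith

end LayerCake

/-- A minimal Følner set lies in a ball of bounded radius. -/
theorem folner_connected {Q : Type*} [Group Q] (S F : Finset Q) (hS : S.Nonempty) (ε : ℝ)
    (hF : F.Nonempty) (hFol : ((S * F).card : ℝ) ≤ (1 + ε) * F.card)
    (hmin : ∀ F' : Finset Q, F'.Nonempty → ((S * F').card : ℝ) ≤ (1 + ε) * F'.card →
      F.card ≤ F'.card) :
    ∃ f ∈ F, F ⊆ (S⁻¹ * S) ^ F.card * {f} := by
  obtain ⟨f, hf⟩ := hF
  have hone : (1 : Q) ∈ S⁻¹ * S := by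
    obtain ⟨s, hs⟩ := hS
    have : (1 : Q) = s⁻¹ * s := by group
    rw [this]
    exact Finset.mul_mem_mul (Finset.inv_mem_inv hs) hs
  set A : ℕ → Finset Q := fun j =>
    Nat.rec {f} (fun _ Aj => Aj ∪ (F ∩ ((S⁻¹ * S) * Aj))) j with hA
  have hA0 : A 0 = {f} := rfl
  have hAsucc : ∀ j, A (j + 1) = A j ∪ (F ∩ ((S⁻¹ * S) * A j)) := fun j => rfl
  have hAF : ∀ j, A j ⊆ F := by
    intro j
    induction j with
    | zero => rw [hA0]; exact Finset.singleton_subset_iff.2 hf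
    | succ j ih =>
      rw [hAsucc]
      exact Finset.union_subset ih (Finset.inter_subset_left)
  have hmono : ∀ j, A j ⊆ A (j + 1) := fun j => by
    rw [hAsucc]; exact Finset.subset_union_left
  have hpow : ∀ j, A j ⊆ (S⁻¹ * S) ^ j * {f} := by
    intro j
    induction j with
    | zero => rw [hA0, pow_zero, _root_.one_mul]
    | succ j ih =>
      rw [hAsucc]
      apply Finset.union_subset
      · refine ih.trans (Finset.mul_subset_mul_right ?_)
        exact Finset.pow_subset_pow_right hone (Nat.le_succ j)
      · refine Finset.inter_subset_right.trans ?_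
        have h1 : (S⁻¹ * S) * A j ⊆ (S⁻¹ * S) * ((S⁻¹ * S) ^ j * {f}) :=
          Finset.mul_subset_mul_left ih
        have h2 : (S⁻¹ * S) * ((S⁻¹ * S) ^ j * {f}) = (S⁻¹ * S) ^ (j + 1) * {f} := by
          rw [← mul_assoc, ← pow_succ']
        rw [h2] at h1
        exact h1
  have hane : ∀ j, (A j).Nonempty := fun j => by
    induction j with
    | zero => exact ⟨f, by rw [hA0]; exact Finset.mem_singleton_self f⟩
    | succ j ih => exact ih.mono (hmono j)
  -- stabilization
  have hstab : ∃ j ≤ F.card, A (j + 1) = A j := by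
    by_contra hcon
    push_neg at hcon
    have hgrow : ∀ j, j ≤ F.card → j + 1 ≤ (A j).card := by
      intro j
      induction j with
      | zero =>
        intro _
        rw [hA0, Finset.card_singleton]
      | succ j ih =>
        intro hj
        have h1 : A j ⊂ A (j + 1) :=
          Finset.ssubset_iff_subset_ne.2 ⟨hmono j, fun h => hcon j (by omega) h.symm⟩
        have := Finset.card_lt_card h1
        have := ih (by omega)
        omega
    have h1 := hgrow F.card le_rfl
    have h2 := Finset.card_le_card (hAF F.card)
    omega
  obtain ⟨j₀, hj₀, hstable⟩ := hstab
  have hclosed : F ∩ ((S⁻¹ * S) * A j₀) ⊆ A j₀ := by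
    intro x hx
    have : x ∈ A (j₀ + 1) := by rw [hAsucc]; exact Finset.mem_union_right _ hx
    rwa [hstable] at this
  -- claim F = A j₀
  have hfA : ∀ j, f ∈ A j := by
    intro j
    induction j with
    | zero => rw [hA0]; exact Finset.mem_singleton_self f
    | succ j ih => exact hmono j ih
  have hFA : F ⊆ A j₀ := by
    by_contra hcon
    set B := F \ A j₀ with hB
    have hBne : B.Nonempty := by
      rw [hB, Finset.sdiff_nonempty]
      exact hcon
    have hAFj := hAF j₀
    have hFAB : F = A j₀ ∪ B := by
      rw [hB, Finset.union_sdiff_of_subset hAFj]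
    have hdisj : Disjoint (S * A j₀) (S * B) := by
      rw [Finset.disjoint_left]
      intro x hx hx'
      obtain ⟨s, hs, a, ha, rfl⟩ := Finset.mem_mul.1 hx
      obtain ⟨t, ht, b, hb, heq⟩ := Finset.mem_mul.1 hx'
      have hbF : b ∈ F := (Finset.mem_sdiff.1 hb).1
      have hbA : b ∈ A j₀ := by
        apply hclosed
        refine Finset.mem_inter.2 ⟨hbF, ?_⟩
        have hb2 : b = t⁻¹ * s * a := by
          rw [mul_assoc, ← heq]
          group
        rw [hb2]
        exact Finset.mul_mem_mul (Finset.mul_mem_mul (Finset.inv_mem_inv ht) hs) ha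
      exact (Finset.mem_sdiff.1 hb).2 hbA
    have hsplit : S * F = S * A j₀ ∪ S * B := by
      calc S * F = S * (A j₀ ∪ B) := by rw [← hFAB]
        _ = S * A j₀ ∪ S * B := Finset.mul_union
    have hcardF : (F.card : ℝ) = (A j₀).card + B.card := by
      rw [hFAB, Finset.card_union_of_disjoint Finset.disjoint_sdiff]
      push_cast; ring
    have hcardSF : ((S * F).card : ℝ) = ((S * A j₀).card : ℝ) + ((S * B).card : ℝ) := by
      rw [hsplit, Finset.card_union_of_disjoint hdisj]
      push_cast; ring
    obtain ⟨x, hxF, hxA⟩ := Finset.not_subset.1 hcon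
    by_cases hgoodA : ((S * A j₀).card : ℝ) ≤ (1 + ε) * (A j₀).card
    · have h1 := hmin (A j₀) (hane j₀) hgoodA
      have h2 : A j₀ ⊂ F := Finset.ssubset_iff_subset_ne.2
        ⟨hAFj, fun h => hxA (h ▸ hxF)⟩
      have := Finset.card_lt_card h2
      omega
    · push_neg at hgoodA
      have hexp : (1 + ε) * (((A j₀).card : ℝ) + B.card)
          = (1 + ε) * (A j₀).card + (1 + ε) * B.card := by ring
      have hBfol : ((S * B).card : ℝ) ≤ (1 + ε) * B.card := by
        rw [hcardF, hexp] at hFol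
        linarith
      have h1 := hmin B hBne hBfol
      have h2 : B ⊂ F := by
        refine Finset.ssubset_iff_subset_ne.2 ⟨Finset.sdiff_subset, fun h => ?_⟩
        have : f ∈ B := h ▸ hf
        exact (Finset.mem_sdiff.1 this).2 (hfA j₀)
      have := Finset.card_lt_card h2
      omega
  exact ⟨f, hf, hFA.trans ((hpow j₀).trans (Finset.mul_subset_mul_right
    (Finset.pow_subset_pow_right hone hj₀)))⟩

/-- If a group has a separating family of homomorphisms into groups satisfying a common
Følner bound, then it satisfies a Følner bound. -/
theorem satUA_of_separating {K : Type*} [Group K] {ι : Type*} (Qf : ι → Type*)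
    [∀ i, Group (Qf i)] (φ : ∀ i, K →* Qf i) (m : ℝ → ℕ → ℕ)
    (hua : ∀ i, SatUA (Qf i) m)
    (hsep : ∀ X : Finset K, ∃ i, Set.InjOn (φ i) ↑X) :
    SatUA K (fun ε n => max 1 (m ε n)) := by
  intro ε hε S
  by_cases hSne : S.Nonempty
  swap
  · rw [Finset.not_nonempty_iff_eq_empty] at hSne
    subst hSne
    refine ⟨{1}, ⟨1, Finset.mem_singleton_self 1⟩, by simp, ?_⟩
    rw [Finset.empty_mul]
    simp
    positivity
  set k := m ε S.card with hk
  set X := S ∪ S * (S⁻¹ * S) ^ k with hX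
  obtain ⟨i, hinj⟩ := hsep X
  set ψQ := φ i with hψQ
  set Sb := S.image ψQ with hSb
  have hSX : S ⊆ X := Finset.subset_union_left
  have hSbcard : Sb.card = S.card := Finset.card_image_of_injOn
    (hinj.mono (by exact_mod_cast hSX))
  have hSbne : Sb.Nonempty := hSne.image _
  -- minimal Følner set in the target
  have hP : ∃ c : ℕ, ∃ Fb : Finset (Qf i), Fb.Nonempty ∧
      ((Sb * Fb).card : ℝ) ≤ (1 + ε) * Fb.card ∧ Fb.card = c := by
    obtain ⟨Fb, h1, h2, h3⟩ := hua i ε hε Sb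
    exact ⟨Fb.card, Fb, h1, h3, rfl⟩
  obtain ⟨Fb, hFbne, hFbfol, hFbcard⟩ := Nat.find_spec hP
  have hmin : ∀ F' : Finset (Qf i), F'.Nonempty →
      ((Sb * F').card : ℝ) ≤ (1 + ε) * F'.card → Fb.card ≤ F'.card := by
    intro F' h1 h2
    rw [hFbcard]
    exact Nat.find_min' hP ⟨F', h1, h2, rfl⟩
  have hFbk : Fb.card ≤ k := by
    obtain ⟨Fb0, h1, h2, h3⟩ := hua i ε hε Sb
    calc Fb.card ≤ Fb0.card := hmin Fb0 h1 h3
      _ ≤ m ε Sb.card := h2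
      _ = k := by rw [hSbcard]
  obtain ⟨fb, hfb, hball⟩ := folner_connected Sb Fb hSbne ε hFbne hFbfol hmin
  set Fb' := Fb * {fb⁻¹} with hFb'
  have hFb'card : Fb'.card = Fb.card := Finset.card_mul_singleton _ _
  have hFb'ne : Fb'.Nonempty := by
    rw [hFb']
    exact hFbne.mul ⟨fb⁻¹, Finset.mem_singleton_self _⟩
  have hone : (1 : Qf i) ∈ Sb⁻¹ * Sb := by
    obtain ⟨s, hs⟩ := hSbne
    have : (1 : Qf i) = s⁻¹ * s := by group
    rw [this]
    exact Finset.mul_mem_mul (Finset.inv_mem_inv hs) hs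
  have hball' : Fb' ⊆ (Sb⁻¹ * Sb) ^ k := by
    intro x hx
    obtain ⟨a, ha, y, hy, rfl⟩ := Finset.mem_mul.1 hx
    rw [Finset.mem_singleton] at hy
    obtain ⟨z, hz, w, hw, hzw⟩ := Finset.mem_mul.1 (hball ha)
    rw [Finset.mem_singleton] at hw
    have heq : a * y = z := by
      rw [← hzw, hw, hy]
      group
    rw [heq]
    exact Finset.pow_subset_pow_right hone hFbk hz
  have hFb'fol : ((Sb * Fb').card : ℝ) ≤ (1 + ε) * Fb'.card := by
    have h1 : Sb * Fb' = (Sb * Fb) * {fb⁻¹} := by rw [hFb', mul_assoc]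
    rw [h1, Finset.card_mul_singleton, hFb'card]
    exact hFbfol
  -- lift back
  have himg : ((S⁻¹ * S) ^ k).image ψQ = (Sb⁻¹ * Sb) ^ k := by
    rw [Finset.image_pow ψQ, Finset.image_mul ψQ, Finset.image_inv ψQ]
  set lift : Qf i → K := fun x =>
    if h : ∃ a, a ∈ (S⁻¹ * S) ^ k ∧ ψQ a = x then h.choose else 1 with hlift
  have hliftspec : ∀ x ∈ Fb', lift x ∈ (S⁻¹ * S) ^ k ∧ ψQ (lift x) = x := by
    intro x hx
    have hx2 : x ∈ ((S⁻¹ * S) ^ k).image ψQ := by rw [himg]; exact hball' hx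
    obtain ⟨a, ha, hax⟩ := Finset.mem_image.1 hx2
    have h : ∃ a, a ∈ (S⁻¹ * S) ^ k ∧ ψQ a = x := ⟨a, ha, hax⟩
    rw [hlift]
    simp only [dif_pos h]
    exact h.choose_spec
  set F := Fb'.image lift with hF
  have hFim : F.image ψQ = Fb' := by
    rw [hF, Finset.image_image]
    rw [show (ψQ ∘ lift) = fun x => ψQ (lift x) from rfl]
    ext y
    simp only [Finset.mem_image]
    constructor
    · rintro ⟨x, hx, rfl⟩
      rw [(hliftspec x hx).2]
      exact hx
    · intro hy
      exact ⟨y, hy, (hliftspec y hy).2⟩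
  have hFcard : F.card = Fb'.card := by
    have h1 : F.card ≤ Fb'.card := Finset.card_image_le
    have h2 : Fb'.card ≤ F.card := by
      rw [← hFim]
      exact Finset.card_image_le
    omega
  have hFsub : F ⊆ (S⁻¹ * S) ^ k := by
    intro x hx
    obtain ⟨y, hy, rfl⟩ := Finset.mem_image.1 hx
    exact (hliftspec y hy).1
  have hSFsub : S * F ⊆ X := by
    refine (Finset.mul_subset_mul_left hFsub).trans ?_
    exact Finset.subset_union_right
  have hSFcard : (S * F).card = (Sb * Fb').card := by
    have h1 : (S * F).image ψQ = Sb * Fb' := by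
      rw [Finset.image_mul ψQ, hFim, hSb]
    rw [← h1]
    exact (Finset.card_image_of_injOn (hinj.mono (by exact_mod_cast hSFsub))).symm
  refine ⟨F, hFb'ne.image lift, ?_, ?_⟩
  · rw [hFcard, hFb'card]
    calc Fb.card ≤ k := hFbk
      _ = m ε S.card := hk
      _ ≤ max 1 (m ε S.card) := le_max_right _ _
  · rw [hSFcard, hFcard, hFb'card]
    rw [hFb'card] at hFb'fol
    exact hFb'fol

section Machinery

variable (G : Type*) [Group G]

/-- The canonical map to the profinite completion. -/
def toPC : G →* profiniteCompletion G where
  toFun g := ⟨fun N => QuotientGroup.mk g, by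
    intro N M h
    simp only
    rfl⟩
  map_one' := by
    apply Subtype.ext
    funext N
    simp
  map_mul' a b := by
    apply Subtype.ext
    funext N
    simp

theorem toPC_injective (h : ResiduallyFinite G) : Function.Injective (toPC G) := by
  rw [injective_iff_map_eq_one]
  intro g hg
  by_contra hg1
  obtain ⟨N, hnorm, hfi, hgN⟩ := h g hg1
  have h2 : (QuotientGroup.mk g : G ⧸ N) = 1 := by
    have := congrFun (Subtype.ext_iff.1 hg) ⟨N, hnorm, hfi⟩
    exact this
  rw [QuotientGroup.eq_one_iff] at h2
  exact hgN h2

/-- The projection from the profinite completion to a finite quotient. -/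
def projPC (N : FIN G) : profiniteCompletion G →* G ⧸ N.1 :=
  (Pi.evalMonoidHom (fun N : FIN G => G ⧸ N.1) N).comp (profiniteCompletion G).subtype

theorem projPC_separates (X : Finset (profiniteCompletion G)) :
    ∃ N : FIN G, Set.InjOn (projPC G N) ↑X := by
  classical
  set pick : profiniteCompletion G × profiniteCompletion G → FIN G := fun p =>
    if h : ∃ N : FIN G, p.1.1 N ≠ p.2.1 N then h.choose
    else ⟨⊤, inferInstance, inferInstance⟩ with hpickdef
  have hpick : ∀ p : profiniteCompletion G × profiniteCompletion G,
      (∃ N : FIN G, p.1.1 N ≠ p.2.1 N) → p.1.1 (pick p) ≠ p.2.1 (pick p) := by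
    intro p h
    have heq : pick p = h.choose := by rw [hpickdef]; exact dif_pos h
    rw [heq]
    exact h.choose_spec
  set P := (X ×ˢ X).filter (fun p => p.1 ≠ p.2) with hP
  have hnormal : (⨅ p ∈ P, (pick p).1).Normal := by
    constructor
    intro n hn g
    simp only [Subgroup.mem_iInf] at hn ⊢
    intro p hp
    exact (pick p).2.1.conj_mem n (hn p hp) g
  have hfi : (⨅ p ∈ P, (pick p).1).FiniteIndex :=
    Subgroup.finiteIndex_iInf' _ (fun p _ => (pick p).2.2)
  refine ⟨⟨⨅ p ∈ P, (pick p).1, hnormal, hfi⟩, ?_⟩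
  intro x hx y hy hxy
  by_contra hne
  have hpP : (x, y) ∈ P := by
    rw [hP, Finset.mem_filter]
    exact ⟨Finset.mem_product.2 ⟨hx, hy⟩, hne⟩
  have hxne : ∃ N : FIN G, x.1 N ≠ y.1 N := by
    by_contra hcon
    push_neg at hcon
    exact hne (Subtype.ext (funext hcon))
  have hkey := hpick (x, y) hxne
  set N₀ : FIN G := ⟨⨅ p ∈ P, (pick p).1, hnormal, hfi⟩ with hN₀
  have hle : N₀.1 ≤ (pick (x, y)).1 := by
    rw [hN₀]
    exact iInf₂_le (x, y) hpP
  have hcx := x.2 N₀ (pick (x, y)) hle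
  have hcy := y.2 N₀ (pick (x, y)) hle
  have hproj : x.1 N₀ = y.1 N₀ := hxy
  rw [← hcx, ← hcy, hproj] at hkey
  exact hkey rfl

end Machinery


theorem ua_iff_pc {G : Type*} [Group G] (h : ResiduallyFinite G) :
    UniformlyAmenableGroup G ↔ UniformlyAmenableGroup (profiniteCompletion G) := by
  constructor
  · rintro ⟨m, hm⟩
    exact ⟨fun ε n => max 1 (mbar m ε n), satUA_of_separating (fun N : FIN G => G ⧸ N.1) (projPC G) (mbar m)
      (fun N => satUA_of_surjective (QuotientGroup.mk'_surjective N.1) hm)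
      (projPC_separates G)⟩
  · rintro ⟨m, hm⟩
    exact ⟨m, satUA_of_injective (toPC G) (toPC_injective G h) hm⟩

/-- If `G₁` and `G₂` are residually finite groups with isomorphic profinite completions,
then `G₁` is uniformly amenable if and only if `G₂` is uniformly amenable. -/
theorem uniformlyAmenable_profinite_invariant (G₁ G₂ : Type*) [Group G₁] [Group G₂]
    (h₁ : ResiduallyFinite G₁) (h₂ : ResiduallyFinite G₂)
    (e : profiniteCompletion G₁ ≃* profiniteCompletion G₂) :
    UniformlyAmenableGroup G₁ ↔ UniformlyAmenableGroup G₂ := by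
  rw [ua_iff_pc h₁, ua_iff_pc h₂]
  constructor
  · rintro ⟨m, hm⟩
    exact ⟨m, satUA_of_injective e.symm.toMonoidHom e.symm.injective hm⟩
  · rintro ⟨m, hm⟩
    exact ⟨m, satUA_of_injective e.toMonoidHom e.injective hm⟩
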